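/- Let ℓ: ℝ^D → ℝ be convex and g_τ a SCAD-like penalty with constants a_0 ≥ a_1 > 0 and b_2 > b_1 > 0. Let β* ∈ ℝ^D have support graph 𝒢* (the graph on d vertices with an edge {i,j} iff β*_{(ij)} ≠ 0) with K* connected components C*_1, …, C*_{K*}, block support set S* = {(ij) : i, j in the same connected component of 𝒢*}, and largest component size d*_max. Let β̂^orc be the unique minimizer of ℓ(β) subject to β_{S*ᶜ} = 0, and assume ∇_{S*} ℓ(β̂^orc) = 0. Suppose b ∈ ℝ^D satisfies: (a) whenever i and j lie in the same connected component of the support graph of 𝒜(b), they lie in the same connected component of 𝒢*; (b) for every connected component C*_k of 𝒢* containing at least one edge, the second-smallest eigenvalue of ℒ(|b_{C*_k}|) is at least b_2 τ; and (c) ‖∇_{S*ᶜ} ℓ(β̂^orc)‖_max < a_0 τ / d*_max. Then the LLA step from b yields β̂^orc, i.e., β̂^orc is the unique minimizer of β ↦ ℓ(β) + ½ ℳ(V, g_τ'(λ))ᵀ|β| where (V, λ) is an eigendecomposition of ℒ(|b|). In particular, if β̂^orc itself satisfies (b) (with b replaced by β̂^orc) and (c), then β̂^orc is a fixed point of the LLA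 algorithm and hence a stationary point of the FCLS-penalized problem minimize ℓ(β) + ½ Σ_j g_τ(λ_j(ℒ(|β|))). -/

import Mathlib

open scoped BigOperators
open Matrix

namespace FCLS

/-- Edge index: pairs `(i, j)` with `i < j`. -/
abbrev EdgeIdx (d : ℕ) := {p : Fin d × Fin d // p.1 < p.2}

/-- Hollow symmetric adjacency matrix attached to an edge vector. -/
def adjM {d : ℕ} (x : EdgeIdx d → ℝ) : Matrix (Fin d) (Fin d) ℝ :=
  Matrix.of fun i j =>
    if h : i < j then x ⟨(i, j), h⟩ else if h' : j < i then x ⟨(j, i), h'⟩ else 0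

/-- Graph Laplacian of a square matrix. -/
def lapM {n : Type*} [Fintype n] [DecidableEq n] (A : Matrix n n ℝ) : Matrix n n ℝ :=
  Matrix.diagonal (fun i => ∑ j, A i j) - A

/-- Graph Laplacian of an edge vector. -/
def lap {d : ℕ} (x : EdgeIdx d → ℝ) : Matrix (Fin d) (Fin d) ℝ := lapM (adjM x)

/-- Eigenvalues sorted in nondecreasing order (`0` when not Hermitian). -/
noncomputable def eigs {n : Type*} [Fintype n] [DecidableEq n] (A : Matrix n n ℝ) :
    Fin (Fintype.card n) → ℝ :=
  if hA : A.IsHermitian then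
    (fun v : Fin (Fintype.card n) → ℝ => v ∘ Tuple.sort v)
      (hA.eigenvalues ∘ (Fintype.equivFin n).symm)
  else 0

/-- `j`-th smallest eigenvalue, `1`-indexed. -/
noncomputable def eigAsc {n : Type*} [Fintype n] [DecidableEq n] (A : Matrix n n ℝ) (j : ℕ) : ℝ :=
  if h : j - 1 < Fintype.card n then eigs A ⟨j - 1, h⟩ else 0

/-- Laplacian coefficient `ℳ(V, w)`. -/
def lapCoeff {d K : ℕ} (V : Matrix (Fin d) (Fin K) ℝ) (w : Fin K → ℝ) : EdgeIdx d → ℝ :=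
  fun e => ∑ k, w k * (V e.1.1 k - V e.1.2 k) ^ 2

/-- Support graph of an edge vector. -/
def suppGraph {d : ℕ} (x : EdgeIdx d → ℝ) : SimpleGraph (Fin d) :=
  SimpleGraph.fromRel fun i j => ∃ h : i < j, x ⟨(i, j), h⟩ ≠ 0

/-- Support graph of a square matrix. -/
def suppGraphM {d : ℕ} (A : Matrix (Fin d) (Fin d) ℝ) : SimpleGraph (Fin d) :=
  SimpleGraph.fromRel fun i j => A i j ≠ 0

/-- Block support: edges whose endpoints lie in a common connected component
of the support graph. -/
def blockSupp {d : ℕ} (x : EdgeIdx d → ℝ) : Set (EdgeIdx d) :=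
  {e | (suppGraph x).Reachable e.1.1 e.1.2}

/-- Number of vertices in the connected component of `i`. -/
noncomputable def compCard {d : ℕ} (G : SimpleGraph (Fin d)) (i : Fin d) : ℕ :=
  Nat.card {j : Fin d // G.Reachable i j}

/-- Largest connected-component size. -/
noncomputable def maxCompCard {d : ℕ} (G : SimpleGraph (Fin d)) : ℕ :=
  Finset.univ.sup fun i => compCard G i

/-- Number of connected components. -/
noncomputable def numComp {d : ℕ} (G : SimpleGraph (Fin d)) : ℕ :=
  Nat.card G.ConnectedComponent

open Classical in
/-- Restriction of an edge vector to edges inside a vertex set. -/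
noncomputable def restrictE {d : ℕ} (x : EdgeIdx d → ℝ) (S : Set (Fin d)) : EdgeIdx d → ℝ :=
  fun e => if e.1.1 ∈ S ∧ e.1.2 ∈ S then x e else 0

/-- `j`-th smallest eigenvalue (1-indexed) of the Laplacian of the adjacency
submatrix on the vertex set `S`. -/
noncomputable def subLapEig {d : ℕ} (x : EdgeIdx d → ℝ) (S : Set (Fin d)) (j : ℕ) : ℝ :=
  letI : Fintype S := Fintype.ofFinite S
  eigAsc (lapM ((adjM x).submatrix (fun a : S => (a : Fin d)) fun a : S => (a : Fin d))) j

/-- Spectral (`ℓ2 → ℓ2` operator) norm of a matrix. -/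
noncomputable def opNorm {m n : Type*} [Fintype m] [Fintype n] [DecidableEq n]
    (A : Matrix m n ℝ) : ℝ :=
  ‖LinearMap.toContinuousLinearMap (Matrix.toEuclideanLin A)‖

/-- Entrywise `ℓ1` norm of a matrix. -/
noncomputable def matL1 {m n : Type*} [Fintype m] [Fintype n] (A : Matrix m n ℝ) : ℝ :=
  ∑ i, ∑ j, |A i j|

/-- Frobenius norm of a matrix. -/
noncomputable def frob {m n : Type*} [Fintype m] [Fintype n] (A : Matrix m n ℝ) : ℝ :=
  Real.sqrt (∑ i, ∑ j, A i j ^ 2)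

/-- `ℓ1 → ℓ1` operator norm: maximal absolute row sum. -/
noncomputable def opOne {m n : Type*} [Fintype m] [Fintype n] (A : Matrix m n ℝ) : ℝ :=
  ⨆ i, ∑ j, |A i j|

/-- `ℓ2 → ℓ∞` operator norm: maximal Euclidean row norm. -/
noncomputable def twoInf {m n : Type*} [Fintype m] [Fintype n] (A : Matrix m n ℝ) : ℝ :=
  ⨆ i, Real.sqrt (∑ j, A i j ^ 2)

/-- Max (absolute) entry of a vector. -/
noncomputable def vecMax {ι : Type*} [Fintype ι] (v : ι → ℝ) : ℝ := ⨆ i, |v i|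

/-- `ℓ1` norm of a vector. -/
noncomputable def l1 {ι : Type*} [Fintype ι] (v : ι → ℝ) : ℝ := ∑ i, |v i|

/-- `ℓ2` norm of a vector. -/
noncomputable def l2 {ι : Type*} [Fintype ι] (v : ι → ℝ) : ℝ := Real.sqrt (∑ i, v i ^ 2)

/-- SCAD-like folded concave penalty `g` with (within-domain) derivative `g'`. -/
structure SCADLike (g g' : ℝ → ℝ) (a0 a1 b1 b2 τ : ℝ) : Prop where
  a1_le_a0 : a1 ≤ a0
  a1_pos : 0 < a1
  b1_pos : 0 < b1
  b1_lt_b2 : b1 < b2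
  map_zero : g 0 = 0
  mono : MonotoneOn g (Set.Ici 0)
  concave : ConcaveOn ℝ (Set.Ici 0) g
  hasDeriv : ∀ t ∈ Set.Ici (0 : ℝ), HasDerivWithinAt g (g' t) (Set.Ici 0) t
  deriv_zero : g' 0 = a0 * τ
  deriv_low : ∀ t : ℝ, 0 < t → t ≤ b1 * τ → a1 * τ ≤ g' t
  deriv_high : ∀ t : ℝ, b2 * τ ≤ t → g' t = 0

/-- `(V, lam)` is an orthonormal eigendecomposition of `A`. -/
def IsEigenDecomp {d : ℕ} (A V : Matrix (Fin d) (Fin d) ℝ) (lam : Fin d → ℝ) : Prop :=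
  Vᵀ * V = 1 ∧ ∀ k, A *ᵥ (fun i => V i k) = lam k • fun i => V i k

/-- LLA surrogate objective with weight vector `M`. -/
noncomputable def llaObj {d : ℕ} (ℓ : (EdgeIdx d → ℝ) → ℝ) (M β : EdgeIdx d → ℝ) : ℝ :=
  ℓ β + (1 / 2) * ∑ e, M e * |β e|

/-- `out` is the output of one LLA step from `b` (for some orthonormal
eigendecomposition of `ℒ(|b|)`). -/
def LLAStep {d : ℕ} (ℓ : (EdgeIdx d → ℝ) → ℝ) (g' : ℝ → ℝ) (b out : EdgeIdx d → ℝ) : Prop :=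
  ∃ V lam, IsEigenDecomp (lap fun e => |b e|) V lam ∧
    ∀ β, llaObj ℓ (lapCoeff V fun k => g' (lam k)) out ≤
      llaObj ℓ (lapCoeff V fun k => g' (lam k)) β

/-- `β` solves the weighted Lasso block-oracle problem with weights `w`. -/
def OrcLassoSol {d : ℕ} (ℓ : (EdgeIdx d → ℝ) → ℝ) (S : Set (EdgeIdx d))
    (w β : EdgeIdx d → ℝ) : Prop :=
  (∀ e ∉ S, β e = 0) ∧
  ∀ γ : EdgeIdx d → ℝ, (∀ e ∉ S, γ e = 0) →
    ℓ β + (1 / 2) * ∑ e, w e * |β e| ≤ ℓ γ + (1 / 2) * ∑ e, w e * |γ e|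

/-- The set `T_op(ρ, τ)` of weighted-Lasso-oracle solutions with small weights. -/
def TopSet {d : ℕ} (ℓ : (EdgeIdx d → ℝ) → ℝ) (S : Set (EdgeIdx d))
    (a0 τ ρ : ℝ) : Set (EdgeIdx d → ℝ) :=
  {β | ∃ w : EdgeIdx d → ℝ, (∀ e, 0 ≤ w e) ∧ (∀ e ∉ S, w e = 0) ∧
      (∀ e, w e ≤ 2 ^ 5 * a0 * τ * ρ ^ 2) ∧ OrcLassoSol ℓ S w β}


/-! ### Auxiliary lemmas -/

section AuxBasic

variable {d : ℕ}

lemma adjM_symm (x : EdgeIdx d → ℝ) (i j : Fin d) : adjM x j i = adjM x i j := by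
  unfold adjM
  rcases lt_trichotomy i j with h | h | h
  · simp [of_apply, dif_pos h, dif_neg (asymm h), h]
  · simp [h]
  · simp [of_apply, dif_pos h, dif_neg (asymm h), h]

lemma adjM_abs (x : EdgeIdx d → ℝ) (i j : Fin d) :
    adjM (fun e => |x e|) i j = |adjM x i j| := by
  unfold adjM
  rcases lt_trichotomy i j with h | h | h
  · simp [of_apply, dif_pos h]
  · simp [h, lt_irrefl]
  · simp [of_apply, dif_pos h, dif_neg (asymm h)]

lemma suppGraph_adj_iff (x : EdgeIdx d → ℝ) (i j : Fin d) :
    (suppGraph x).Adj i j ↔ adjM x i j ≠ 0 := by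
  unfold suppGraph adjM
  rw [SimpleGraph.fromRel_adj]
  constructor
  · rintro ⟨hne, ⟨hlt, hx⟩ | ⟨hlt, hx⟩⟩
    · simpa [of_apply, dif_pos hlt] using hx
    · simpa [of_apply, dif_neg (asymm hlt), dif_pos hlt] using hx
  · intro hx
    rcases lt_trichotomy i j with h | h | h
    · exact ⟨h.ne, Or.inl ⟨h, by simpa [of_apply, dif_pos h] using hx⟩⟩
    · simp [h, lt_irrefl] at hx
    · exact ⟨h.ne', Or.inr ⟨h, by simpa [of_apply, dif_neg (asymm h), dif_pos h] using hx⟩⟩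

lemma reachable_mono {G H : SimpleGraph (Fin d)}
    (h : ∀ i j, G.Adj i j → H.Reachable i j) {i j : Fin d} (hr : G.Reachable i j) :
    H.Reachable i j := by
  obtain ⟨w⟩ := hr
  induction w with
  | nil => rfl
  | cons ha _ ih => exact (h _ _ ha).trans ih

end AuxBasic

section AuxLap

variable {n : Type*} [Fintype n] [DecidableEq n]

lemma lapM_mulVec (A : Matrix n n ℝ) (u : n → ℝ)
    (i : n) : (lapM A *ᵥ u) i = (∑ j, A i j) * u i - ∑ j, A i j * u j := by
  rw [lapM, sub_mulVec, Pi.sub_apply, mulVec_diagonal]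
  simp [mulVec, dotProduct]

lemma lapM_quadform (A : Matrix n n ℝ) (hsym : ∀ i j, A j i = A i j) (u : n → ℝ) :
    ∑ i, u i * (lapM A *ᵥ u) i = (1/2) * ∑ i, ∑ j, A i j * (u i - u j)^2 := by
  have hswap : ∑ i, ∑ j, A i j * u j ^ 2 = ∑ i, ∑ j, A i j * u i ^ 2 := by
    rw [Finset.sum_comm]
    exact Finset.sum_congr rfl fun i _ => Finset.sum_congr rfl fun j _ => by rw [hsym]
  have L : ∑ i, u i * (lapM A *ᵥ u) i
      = (∑ i, ∑ j, A i j * u i ^ 2) - ∑ i, ∑ j, A i j * (u i * u j) := by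
    rw [← Finset.sum_sub_distrib]
    refine Finset.sum_congr rfl fun i _ => ?_
    rw [lapM_mulVec, mul_sub, Finset.sum_mul, Finset.mul_sum, Finset.mul_sum,
      ← Finset.sum_sub_distrib]
    rw [Finset.sum_sub_distrib]
    congr 1 <;> exact Finset.sum_congr rfl fun j _ => by ring
  have R : ∑ i, ∑ j, A i j * (u i - u j) ^ 2
      = (∑ i, ∑ j, A i j * u i ^ 2) + (∑ i, ∑ j, A i j * u j ^ 2)
        - 2 * ∑ i, ∑ j, A i j * (u i * u j) := by
    rw [Finset.mul_sum, ← Finset.sum_add_distrib, ← Finset.sum_sub_distrib]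
    refine Finset.sum_congr rfl fun i _ => ?_
    rw [Finset.mul_sum, ← Finset.sum_add_distrib, ← Finset.sum_sub_distrib]
    exact Finset.sum_congr rfl fun j _ => by ring
  rw [L, R, hswap]; ring

lemma lapM_mulVec_indicator (A : Matrix n n ℝ)
    (p : n → Prop) [DecidablePred p]
    (hblock : ∀ x y, A x y ≠ 0 → (p x ↔ p y)) :
    lapM A *ᵥ (fun x => if p x then (1:ℝ) else 0) = 0 := by
  funext x
  rw [lapM_mulVec]
  by_cases hx : p x
  · have hterm : ∀ j, A x j * (if p j then (1:ℝ) else 0) = A x j := by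
      intro j
      by_cases hA : A x j = 0
      · simp [hA]
      · rw [if_pos ((hblock x j hA).mp hx), mul_one]
    rw [Finset.sum_congr rfl (fun j _ => hterm j), if_pos hx]
    simp
  · have hterm : ∀ j, A x j * (if p j then (1:ℝ) else 0) = 0 := by
      intro j
      by_cases hA : A x j = 0
      · simp [hA]
      · rw [if_neg (fun hj => hx ((hblock x j hA).mpr hj)), mul_zero]
    rw [Finset.sum_congr rfl (fun j _ => hterm j), if_neg hx]
    simp

end AuxLap

section AuxEig

variable {n : Type*} [Fintype n] [DecidableEq n]

/-- Abstract orthonormal eigendecomposition data. -/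
structure EigData (B : Matrix n n ℝ) {ι : Type*} [Fintype ι] [DecidableEq ι]
    (w : ι → n → ℝ) (μ : ι → ℝ) : Prop where
  orth : ∀ k l, ∑ i, w k i * w l i = (if k = l then (1:ℝ) else 0)
  compl : ∀ i j, ∑ k, w k i * w k j = (if i = j then (1:ℝ) else 0)
  eig : ∀ k, B *ᵥ w k = μ k • w k

variable {B : Matrix n n ℝ} {ι : Type*} [Fintype ι] [DecidableEq ι]
  {w : ι → n → ℝ} {μ : ι → ℝ}

lemma dot_mulVec_symm (hsym : ∀ i j, B j i = B i j) (a c : n → ℝ) :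
    ∑ i, a i * (B *ᵥ c) i = ∑ j, (B *ᵥ a) j * c j := by
  simp only [mulVec, dotProduct, Finset.mul_sum, Finset.sum_mul]
  rw [Finset.sum_comm]
  exact Finset.sum_congr rfl fun j _ => Finset.sum_congr rfl fun i _ => by rw [hsym]; ring

lemma EigData.expansion (h : EigData B w μ) (v : n → ℝ) (i : n) :
    v i = ∑ k, (∑ j, w k j * v j) * w k i := by
  classical
  have : ∑ k, (∑ j, w k j * v j) * w k i = ∑ j, v j * ∑ k, w k j * w k i := by
    simp only [Finset.sum_mul, Finset.mul_sum]
    rw [Finset.sum_comm]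
    exact Finset.sum_congr rfl fun j _ => Finset.sum_congr rfl fun k _ => by ring
  rw [this]
  simp [h.compl]

lemma EigData.parseval (h : EigData B w μ) (v v' : n → ℝ) :
    ∑ i, v i * v' i = ∑ k, (∑ j, w k j * v j) * (∑ j, w k j * v' j) := by
  calc ∑ i, v i * v' i = ∑ i, ∑ k, ((∑ j, w k j * v j) * w k i) * v' i := by
        refine Finset.sum_congr rfl fun i _ => ?_
        rw [← Finset.sum_mul, ← h.expansion]
    _ = ∑ k, (∑ j, w k j * v j) * ∑ j, w k j * v' j := by
        rw [Finset.sum_comm]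
        refine Finset.sum_congr rfl fun k _ => ?_
        rw [Finset.mul_sum]
        exact Finset.sum_congr rfl fun i _ => by ring

lemma EigData.filter (h : EigData B w μ) (hsym : ∀ i j, B j i = B i j)
    (v : n → ℝ) (lam : ℝ) (hv : B *ᵥ v = lam • v) (k : ι) (hk : μ k ≠ lam) :
    ∑ j, w k j * v j = 0 := by
  have h1 : ∑ i, w k i * (B *ᵥ v) i = lam * ∑ j, w k j * v j := by
    rw [hv]; simp only [Pi.smul_apply, smul_eq_mul, Finset.mul_sum]
    exact Finset.sum_congr rfl fun j _ => by ring
  have h2 : ∑ i, w k i * (B *ᵥ v) i = μ k * ∑ j, w k j * v j := by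
    rw [dot_mulVec_symm hsym, h.eig k]
    simp only [Pi.smul_apply, smul_eq_mul, Finset.mul_sum]
    exact Finset.sum_congr rfl fun j _ => by ring
  have h3 := h1.symm.trans h2
  have hne : μ k - lam ≠ 0 := sub_ne_zero.mpr hk
  have h4 : (μ k - lam) * ∑ j, w k j * v j = 0 := by linarith [h3]
  rcases mul_eq_zero.mp h4 with h' | h'
  · exact absurd h' hne
  · exact h'

/-- Mathlib's spectral theorem gives `EigData`. -/
lemma eigData_of_hermitian {B : Matrix n n ℝ} (hB : B.IsHermitian) :
    EigData B (fun k i => (hB.eigenvectorUnitary : Matrix n n ℝ) i k) hB.eigenvalues := by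
  have h1 : star (hB.eigenvectorUnitary : Matrix n n ℝ) * hB.eigenvectorUnitary = 1 :=
    Unitary.coe_star_mul_self hB.eigenvectorUnitary
  have h2 : (hB.eigenvectorUnitary : Matrix n n ℝ) * star (hB.eigenvectorUnitary : Matrix n n ℝ)
      = 1 := Unitary.coe_mul_star_self hB.eigenvectorUnitary
  refine ⟨fun k l => ?_, fun i j => ?_, fun k => ?_⟩
  · have := congrFun (congrFun h1 k) l
    simp only [Matrix.mul_apply, Matrix.star_apply, Matrix.one_apply, star_trivial] at this
    simpa using this
  · have := congrFun (congrFun h2 i) j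
    simp only [Matrix.mul_apply, Matrix.star_apply, Matrix.one_apply, star_trivial] at this
    simpa using this
  · have h3 : (fun i => (hB.eigenvectorUnitary : Matrix n n ℝ) i k) = ⇑(hB.eigenvectorBasis k) := by
      funext i; exact Matrix.IsHermitian.eigenvectorUnitary_apply hB i k
    rw [h3]
    exact hB.mulVec_eigenvectorBasis k

lemma atMostOne_lt {B : Matrix n n ℝ} (hB : B.IsHermitian)
    {c : ℝ} (hcard : 2 ≤ Fintype.card n) (hgap : c ≤ eigAsc B 2) :
    ∀ k l : n, hB.eigenvalues k < c → hB.eigenvalues l < c → k = l := by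
  intro k l hk hl
  have h1 : (2:ℕ) - 1 < Fintype.card n := by omega
  rw [eigAsc, dif_pos h1, eigs, dif_pos hB] at hgap
  set E := Fintype.equivFin n with hE
  set μ₀ : Fin (Fintype.card n) → ℝ := hB.eigenvalues ∘ E.symm with hμ₀
  set σ := Tuple.sort μ₀ with hσ
  have hmono : Monotone (μ₀ ∘ σ) := Tuple.monotone_sort μ₀
  have key : ∀ m : n, hB.eigenvalues m < c → σ.symm (E m) = ⟨0, by omega⟩ := by
    intro m hm
    by_contra hne
    have h0 : (1:ℕ) ≤ (σ.symm (E m) : ℕ) := by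
      rcases Nat.eq_zero_or_pos (σ.symm (E m) : ℕ) with h | h
      · exact absurd (Fin.ext h) hne
      · exact h
    have hle : (⟨(2:ℕ)-1, h1⟩ : Fin (Fintype.card n)) ≤ σ.symm (E m) := by
      simpa [Fin.le_def] using h0
    have h5 := hmono hle
    simp only [Function.comp_apply, Equiv.apply_symm_apply, hμ₀] at h5
    have h6 : c ≤ hB.eigenvalues (E.symm (E m)) := le_trans hgap h5
    rw [Equiv.symm_apply_apply] at h6
    linarith
  have h7 := (key k hk).trans (key l hl).symm
  exact E.injective (σ.symm.injective h7)

lemma const_of_small_eig {B : Matrix n n ℝ}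
    (hB : B.IsHermitian) (hone : B *ᵥ (fun _ => (1:ℝ)) = 0)
    (hcard : 2 ≤ Fintype.card n) {c : ℝ} (hc : 0 < c) (hgap : c ≤ eigAsc B 2)
    {u : n → ℝ} {lam : ℝ} (hu : B *ᵥ u = lam • u) (hlam : lam < c) (i j : n) : u i = u j := by
  by_contra hij
  have hsym : ∀ i j, B j i = B i j := by
    intro a b
    conv_lhs => rw [← hB]
    simp [Matrix.conjTranspose_apply]
  set w := fun k i => (hB.eigenvectorUnitary : Matrix n n ℝ) i k with hw
  have hD : EigData B w hB.eigenvalues := eigData_of_hermitian hB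
  have hcardpos : (0:ℝ) < (Fintype.card n : ℝ) := by
    have : 0 < Fintype.card n := by omega
    exact_mod_cast this
  set s : ℝ := (∑ x, u x) / (Fintype.card n : ℝ) with hs
  set u' : n → ℝ := fun x => u x - s with hu'
  have hmain : ∃ lam0 : ℝ, lam0 < c ∧ B *ᵥ u' = lam0 • u' := by
    rcases eq_or_ne lam 0 with h0 | h0
    · refine ⟨0, hc, ?_⟩
      have hrepr : u' = u - s • (fun _ => (1:ℝ)) := by
        funext x; simp [hu', Pi.smul_apply, smul_eq_mul]
      have hv : B *ᵥ u' = B *ᵥ u - s • (B *ᵥ (fun _ => (1:ℝ))) := by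
        rw [hrepr, Matrix.mulVec_sub, Matrix.mulVec_smul]
      rw [hone, hu, h0] at hv
      simpa using hv
    · refine ⟨lam, hlam, ?_⟩
      have hzero : ∑ x, u x = 0 := by
        have e1 : ∑ x, (fun _ => (1:ℝ)) x * (B *ᵥ u) x = lam * ∑ x, u x := by
          rw [hu]; simp [Finset.mul_sum]
        have e2 : ∑ x, (fun _ => (1:ℝ)) x * (B *ᵥ u) x = 0 := by
          rw [dot_mulVec_symm hsym, hone]; simp
        rw [e2] at e1
        rcases mul_eq_zero.mp e1.symm with h' | h'
        · exact absurd h' h0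
        · exact h'
      have hs0 : s = 0 := by rw [hs, hzero]; simp
      have hueq : u' = u := by funext x; simp [hu', hs0]
      rw [hueq]; exact hu
  obtain ⟨lam0, hlam0, hBu'⟩ := hmain
  have hone' : B *ᵥ (fun _ => (1:ℝ)) = (0:ℝ) • (fun _ => (1:ℝ)) := by rw [hone]; simp
  have hu'ne : u' i ≠ u' j := by simp [hu', hij, sub_left_injective.ne_iff]
  have horth : ∑ x, (fun _ => (1:ℝ)) x * u' x = 0 := by
    simp only [one_mul, hu', Finset.sum_sub_distrib]
    rw [Finset.sum_const, hs, Finset.card_univ, nsmul_eq_mul]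
    rw [mul_div_cancel₀ _ hcardpos.ne', sub_self]
  have hnonempty : Nonempty n := Fintype.card_pos_iff.mp (by omega)
  obtain ⟨x0⟩ := hnonempty
  have hk1 : ∃ k1, (∑ x, w k1 x * (fun _ => (1:ℝ)) x) ≠ 0 := by
    by_contra hall
    push_neg at hall
    have h8 := hD.expansion (fun _ => (1:ℝ)) x0
    simp only [hall, zero_mul, Finset.sum_const_zero] at h8
    norm_num at h8
  obtain ⟨k1, hk1⟩ := hk1
  have hμ1 : hB.eigenvalues k1 = 0 := by
    by_contra h
    exact hk1 (hD.filter hsym _ 0 hone' k1 h)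
  have hk2 : ∃ k2, (∑ x, w k2 x * u' x) ≠ 0 := by
    by_contra hall
    push_neg at hall
    have hi := hD.expansion u' i
    have hj := hD.expansion u' j
    simp only [hall, zero_mul, Finset.sum_const_zero] at hi hj
    exact hu'ne (hi.trans hj.symm)
  obtain ⟨k2, hk2⟩ := hk2
  have hμ2 : hB.eigenvalues k2 = lam0 := by
    by_contra h
    exact hk2 (hD.filter hsym _ lam0 hBu' k2 h)
  have hk12 : k1 = k2 := by
    refine atMostOne_lt hB hcard hgap k1 k2 ?_ ?_
    · rw [hμ1]; exact hc
    · rw [hμ2]; exact hlam0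
  have hpar := hD.parseval (fun _ => (1:ℝ)) u'
  rw [horth] at hpar
  have hsingle : ∑ k, (∑ x, w k x * (fun _ => (1:ℝ)) x) * (∑ x, w k x * u' x)
      = (∑ x, w k1 x * (fun _ => (1:ℝ)) x) * (∑ x, w k1 x * u' x) := by
    refine Finset.sum_eq_single k1 ?_ ?_
    · intro k _ hkne
      have hz : (∑ x, w k x * (fun _ => (1:ℝ)) x) = 0 := by
        by_contra h
        have hμk : hB.eigenvalues k = 0 := by
          by_contra h'
          exact h (hD.filter hsym _ 0 hone' k h')
        exact hkne (atMostOne_lt hB hcard hgap k k1 (by rw [hμk]; exact hc)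
          (by rw [hμ1]; exact hc))
      rw [hz, zero_mul]
    · intro h; exact absurd (Finset.mem_univ k1) h
  rw [hsingle] at hpar
  rw [hk12] at hpar hk1
  exact (mul_ne_zero hk1 hk2) hpar.symm

end AuxEig

section AuxConvex

lemma scad_deriv_nonneg {g g' : ℝ → ℝ} {a0 a1 b1 b2 τ : ℝ}
    (hg : SCADLike g g' a0 a1 b1 b2 τ) {t : ℝ} (ht : 0 ≤ t) : 0 ≤ g' t := by
  have hconv : ConvexOn ℝ (Set.Ici 0) (fun s => -g s) := by
    simpa [Pi.neg_def] using hg.concave.neg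
  have hder : HasDerivWithinAt (fun s => -g s) (-(g' t)) (Set.Ici 0) t :=
    (hg.hasDeriv t ht).neg
  have ht1 : t + 1 ∈ Set.Ici (0:ℝ) := by simp; linarith
  have hslope := hconv.le_slope_of_hasDerivWithinAt ht ht1 (by linarith) hder
  have hm : g t ≤ g (t+1) := hg.mono ht ht1 (by linarith)
  rw [slope_def_field] at hslope
  have : -(g' t) ≤ (-g (t+1) - -g t) / (t + 1 - t) := hslope
  rw [show t + 1 - t = 1 by ring, div_one] at this
  linarith

variable {d : ℕ}

lemma fderiv_apply_sum (ℓ : (EdgeIdx d → ℝ) → ℝ) (x v : EdgeIdx d → ℝ) :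
    fderiv ℝ ℓ x v = ∑ e, v e * fderiv ℝ ℓ x (Pi.single e 1) := by
  classical
  have hv : v = ∑ e : EdgeIdx d, v e • (Pi.single e (1:ℝ) : EdgeIdx d → ℝ) := by
    funext e'
    simp [Finset.sum_apply, Pi.single_apply]
  conv_lhs => rw [hv]
  rw [map_sum]
  exact Finset.sum_congr rfl fun e _ => by rw [(fderiv ℝ ℓ x).map_smul]; rfl

lemma grad_ineq (ℓ : (EdgeIdx d → ℝ) → ℝ) (hconv : ConvexOn ℝ Set.univ ℓ)
    (hdiff : Differentiable ℝ ℓ) (x y : EdgeIdx d → ℝ) :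
    ℓ x + fderiv ℝ ℓ x (y - x) ≤ ℓ y := by
  set φ : ℝ → ℝ := fun t => ℓ (x + t • (y - x)) with hφ
  have hA : HasDerivAt φ (fderiv ℝ ℓ (x + (0:ℝ) • (y - x)) (y - x)) 0 := by
    have h1 : HasDerivAt (fun t : ℝ => x + t • (y - x)) (y - x) 0 := by
      simpa using ((hasDerivAt_id (0:ℝ)).smul_const (y - x)).const_add x
    exact (hdiff _).hasFDerivAt.comp_hasDerivAt 0 h1
  have hφconv : ConvexOn ℝ Set.univ φ := by
    have := hconv.comp_affineMap (AffineMap.lineMap x y)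
    rw [Set.preimage_univ] at this
    have hfun : φ = ℓ ∘ (AffineMap.lineMap x y : ℝ →ᵃ[ℝ] (EdgeIdx d → ℝ)) := by
      funext t
      simp only [hφ, Function.comp_apply, AffineMap.lineMap_apply, vsub_eq_sub, vadd_eq_add]
      rw [add_comm]
    rw [hfun]; exact this
  have hslope := hφconv.le_slope_of_hasDerivAt (Set.mem_univ (0:ℝ)) (Set.mem_univ (1:ℝ))
    one_pos hA
  rw [slope_def_field] at hslope
  have h0 : φ 0 = ℓ x := by simp [hφ]
  have h1 : φ 1 = ℓ y := by simp [hφ]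
  have h2 : x + (0:ℝ) • (y - x) = x := by simp
  rw [h0, h1, h2] at hslope
  have : fderiv ℝ ℓ x (y - x) ≤ ℓ y - ℓ x := by
    simpa using hslope
  linarith

lemma min_strict (ℓ : (EdgeIdx d → ℝ) → ℝ) (hconv : ConvexOn ℝ Set.univ ℓ)
    (hdiff : Differentiable ℝ ℓ) (βstar orc : EdgeIdx d → ℝ)
    (horc_supp : ∀ e ∉ blockSupp βstar, orc e = 0)
    (horc_min : ∀ β : EdgeIdx d → ℝ, (∀ e ∉ blockSupp βstar, β e = 0) → β ≠ orc →
      ℓ orc < ℓ β)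
    (hfoc : ∀ e ∈ blockSupp βstar, fderiv ℝ ℓ orc (Pi.single e 1) = 0)
    (M : EdgeIdx d → ℝ) (hM0 : ∀ e, 0 ≤ M e)
    (hMS : ∀ e ∈ blockSupp βstar, M e = 0)
    (hMc : ∀ e ∉ blockSupp βstar, 2 * |fderiv ℝ ℓ orc (Pi.single e 1)| < M e) :
    ∀ β, β ≠ orc → llaObj ℓ M orc < llaObj ℓ M β := by
  classical
  intro β hβ
  have horcobj : llaObj ℓ M orc = ℓ orc := by
    unfold llaObj
    have hz : ∀ e ∈ Finset.univ, M e * |orc e| = 0 := by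
      intro e _
      by_cases he : e ∈ blockSupp βstar
      · rw [hMS e he, zero_mul]
      · rw [horc_supp e he, abs_zero, mul_zero]
    rw [Finset.sum_congr rfl hz]
    simp
  by_cases hsupp : ∀ e ∉ blockSupp βstar, β e = 0
  · have hβobj : llaObj ℓ M β = ℓ β := by
      unfold llaObj
      have hz : ∀ e ∈ Finset.univ, M e * |β e| = 0 := by
        intro e _
        by_cases he : e ∈ blockSupp βstar
        · rw [hMS e he, zero_mul]
        · rw [hsupp e he, abs_zero, mul_zero]
      rw [Finset.sum_congr rfl hz]
      simp
    rw [horcobj, hβobj]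
    exact horc_min β hsupp hβ
  · push_neg at hsupp
    obtain ⟨e₀, he₀S, he₀⟩ := hsupp
    set D := fun e => fderiv ℝ ℓ orc (Pi.single e 1) with hD
    have hgradineq : ℓ orc + ∑ e, (β e - orc e) * D e ≤ ℓ β := by
      have h1 := grad_ineq ℓ hconv hdiff orc β
      rw [fderiv_apply_sum] at h1
      have h2 : ∑ e, (β - orc) e * fderiv ℝ ℓ orc (Pi.single e 1)
          = ∑ e, (β e - orc e) * D e := by
        exact Finset.sum_congr rfl fun e _ => by rw [Pi.sub_apply, hD]
      rwa [h2] at h1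
    set h : EdgeIdx d → ℝ := fun e => (β e - orc e) * D e + (1/2) * (M e * |β e|) with hh
    have hterm : ∀ e ∉ blockSupp βstar, -( |β e| * |D e| ) ≤ (β e - orc e) * D e := by
      intro e he
      rw [horc_supp e he, sub_zero]
      calc -(|β e| * |D e|) = -|β e * D e| := by rw [abs_mul]
        _ ≤ β e * D e := neg_abs_le _
    have hh0 : ∀ e, 0 ≤ h e := by
      intro e
      by_cases he : e ∈ blockSupp βstar
      · have : D e = 0 := hfoc e he
        simp [hh, this, hMS e he]
      · have h1 := hterm e he
        have h2 : |β e| * |D e| ≤ (1/2) * (M e * |β e|) := by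
          have h3 := hMc e he
          have h4 := abs_nonneg (β e)
          nlinarith
        simp only [hh]
        linarith
    have hstrict : 0 < h e₀ := by
      have hb : 0 < |β e₀| := abs_pos.mpr he₀
      have h1 := hterm e₀ he₀S
      have h2 : |β e₀| * |D e₀| < (1/2) * (M e₀ * |β e₀|) := by
        have h3 := hMc e₀ he₀S
        nlinarith
      simp only [hh]
      linarith
    have hsum : 0 < ∑ e, h e :=
      lt_of_lt_of_le hstrict (Finset.single_le_sum (fun e _ => hh0 e) (Finset.mem_univ e₀))
    have hexp : ∑ e, h e = (∑ e, (β e - orc e) * D e) + (1/2) * ∑ e, M e * |β e| := by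
      rw [Finset.mul_sum, ← Finset.sum_add_distrib]
    have hfinal : llaObj ℓ M orc + ∑ e, h e ≤ llaObj ℓ M β := by
      rw [horcobj]
      unfold llaObj
      rw [hexp]
      linarith
    linarith

end AuxConvex

section AuxLap2

variable {n : Type*} [Fintype n] [DecidableEq n]

lemma lapM_symm (A : Matrix n n ℝ) (hsym : ∀ i j, A j i = A i j) (i j : n) :
    lapM A j i = lapM A i j := by
  unfold lapM
  by_cases h : i = j
  · subst h; rfl
  · simp only [Matrix.sub_apply, Matrix.diagonal_apply, if_neg h, if_neg (Ne.symm h), hsym i j]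

lemma lapM_mulVec_one (A : Matrix n n ℝ) : lapM A *ᵥ (fun _ => (1:ℝ)) = 0 := by
  funext i; rw [lapM_mulVec]; simp

lemma sum_subtype_eq {α : Type*} [Fintype α] (S : Set α) [F : Fintype ↥S] (f : α → ℝ)
    (hf : ∀ x ∉ S, f x = 0) : ∑ x : ↥S, f (x : α) = ∑ x, f x := by
  classical
  rw [← Finset.sum_subtype (Finset.univ.filter (· ∈ S)) (fun x => by simp) f]
  exact (Finset.sum_subset (Finset.filter_subset _ _)
    (fun x _ hx => hf x (by simpa using hx)))

lemma bessel_two {ι : Type*} (s : Finset ι) (a b c : ι → ℝ) {P R α β : ℝ}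
    (hP : 0 < P) (hR : 0 < R)
    (ha : ∑ k ∈ s, a k * a k = P) (hb : ∑ k ∈ s, b k * b k = R)
    (hab : ∑ k ∈ s, a k * b k = 0)
    (hac : ∑ k ∈ s, a k * c k = α) (hbc : ∑ k ∈ s, b k * c k = β) :
    α^2/P + β^2/R ≤ ∑ k ∈ s, c k * c k := by
  have h0 : 0 ≤ ∑ k ∈ s, (c k - (α/P) * a k - (β/R) * b k)^2 :=
    Finset.sum_nonneg fun k _ => sq_nonneg _
  have hexp : ∑ k ∈ s, (c k - (α/P)*a k - (β/R)*b k)^2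
      = ∑ k ∈ s, (c k * c k)
        + ((α/P)^2 * ∑ k ∈ s, (a k * a k) + (β/R)^2 * ∑ k ∈ s, (b k * b k)
        - 2*(α/P) * ∑ k ∈ s, (a k * c k) - 2*(β/R) * ∑ k ∈ s, (b k * c k)
        + 2*((α/P)*(β/R)) * ∑ k ∈ s, (a k * b k)) := by
    simp only [Finset.mul_sum]
    rw [← Finset.sum_add_distrib, ← Finset.sum_sub_distrib, ← Finset.sum_sub_distrib,
      ← Finset.sum_add_distrib, ← Finset.sum_add_distrib]
    exact Finset.sum_congr rfl fun k _ => by ring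
  rw [hexp, ha, hb, hab, hac, hbc, mul_zero, add_zero] at h0
  have hP' : P ≠ 0 := ne_of_gt hP
  have hR' : R ≠ 0 := ne_of_gt hR
  have e1 : (α/P)^2 * P = α^2/P := by field_simp [pow_two]
  have e2 : (β/R)^2 * R = β^2/R := by field_simp [pow_two]
  have e3 : 2*(α/P)*α = 2*(α^2/P) := by field_simp
  have e4 : 2*(β/R)*β = 2*(β^2/R) := by field_simp
  rw [e1, e2, e3, e4] at h0
  linarith

end AuxLap2

section KeyLemma

variable {d : ℕ}

lemma key_lemma (hd : 2 ≤ d)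
    (ℓ : (EdgeIdx d → ℝ) → ℝ) (hconv : ConvexOn ℝ Set.univ ℓ) (hdiff : Differentiable ℝ ℓ)
    (g g' : ℝ → ℝ) (a0 a1 b1 b2 τ : ℝ) (hτ : 0 < τ)
    (hg : SCADLike g g' a0 a1 b1 b2 τ)
    (βstar orc : EdgeIdx d → ℝ)
    (horc_supp : ∀ e ∉ blockSupp βstar, orc e = 0)
    (horc_min : ∀ β : EdgeIdx d → ℝ, (∀ e ∉ blockSupp βstar, β e = 0) → β ≠ orc →
      ℓ orc < ℓ β)
    (hfoc : ∀ e ∈ blockSupp βstar, fderiv ℝ ℓ orc (Pi.single e 1) = 0)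
    (hgrad : ∀ e ∉ blockSupp βstar,
      |fderiv ℝ ℓ orc (Pi.single e 1)| < a0 * τ / (maxCompCard (suppGraph βstar) : ℝ))
    (b : EdgeIdx d → ℝ)
    (href : ∀ i j : Fin d, (suppGraph b).Reachable i j → (suppGraph βstar).Reachable i j)
    (hgap : ∀ v : Fin d, (∃ u, (suppGraph βstar).Adj v u) →
        b2 * τ ≤ subLapEig (fun e => |b e|) {j | (suppGraph βstar).Reachable v j} 2)
    (V : Matrix (Fin d) (Fin d) ℝ) (lam : Fin d → ℝ)
    (hVlam : IsEigenDecomp (lap fun e => |b e|) V lam) :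
    ∀ β, β ≠ orc →
      llaObj ℓ (lapCoeff V fun k => g' (lam k)) orc
        < llaObj ℓ (lapCoeff V fun k => g' (lam k)) β := by
  classical
  obtain ⟨hVo, hVe⟩ := hVlam
  set G := suppGraph βstar with hG
  set A : Matrix (Fin d) (Fin d) ℝ := adjM (fun e => |b e|) with hA
  have hLA : (lap fun e => |b e|) = lapM A := rfl
  rw [hLA] at hVe
  -- basic facts about A
  have hAsym : ∀ i j, A j i = A i j := fun i j => adjM_symm _ i j
  have hAnn : ∀ i j, 0 ≤ A i j := fun i j => by rw [hA, adjM_abs]; exact abs_nonneg _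
  have hAblock : ∀ i j, A i j ≠ 0 → G.Reachable i j := by
    intro i j hij
    have hb' : adjM b i j ≠ 0 := by
      rw [hA, adjM_abs] at hij
      simpa [abs_ne_zero] using hij
    exact href i j ((suppGraph_adj_iff b i j).mpr hb').reachable
  have hLsym : ∀ i j, (lapM A) j i = (lapM A) i j := lapM_symm A hAsym
  -- eigen data
  have hVVT : V * Vᵀ = 1 := by rw [mul_eq_one_comm]; exact hVo
  set w : Fin d → Fin d → ℝ := fun k i => V i k with hw
  have hED : EigData (lapM A) w lam := by
    refine ⟨fun k l => ?_, fun i j => ?_, fun k => hVe k⟩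
    · have h1 := congrFun (congrFun hVo k) l
      simpa [Matrix.mul_apply, Matrix.transpose_apply, Matrix.one_apply] using h1
    · have h1 := congrFun (congrFun hVVT i) j
      simpa [Matrix.mul_apply, Matrix.transpose_apply, Matrix.one_apply] using h1
  -- nonnegativity of eigenvalues
  have hlamnn : ∀ k, 0 ≤ lam k := by
    intro k
    have h1 : ∑ i, w k i * w k i = 1 := by simpa using hED.orth k k
    have h2 : ∑ i, w k i * ((lapM A) *ᵥ w k) i = lam k := by
      rw [hED.eig k]
      simp only [Pi.smul_apply, smul_eq_mul]
      calc ∑ i, w k i * (lam k * w k i) = lam k * ∑ i, w k i * w k i := by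
            rw [Finset.mul_sum]; exact Finset.sum_congr rfl fun i _ => by ring
        _ = lam k := by rw [h1, mul_one]
    have h3 : 0 ≤ ∑ i, ∑ j, A i j * (w k i - w k j)^2 :=
      Finset.sum_nonneg fun i _ => Finset.sum_nonneg fun j _ =>
        mul_nonneg (hAnn i j) (sq_nonneg _)
    rw [← h2, lapM_quadform A hAsym]
    linarith
  have hb2τ : 0 < b2 * τ := mul_pos (lt_trans hg.b1_pos hg.b1_lt_b2) hτ
  -- constancy of low eigenvectors on components
  have hconst : ∀ k, lam k < b2 * τ → ∀ i j, G.Reachable i j → w k i = w k j := by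
    intro k hk i j hreach
    rcases eq_or_ne i j with rfl | hij
    · rfl
    obtain ⟨p⟩ := hreach
    have hadj : ∃ u, G.Adj i u := by
      cases p with
      | nil => exact absurd rfl hij
      | cons ha _ => exact ⟨_, ha⟩
    have hgapi := hgap i hadj
    rw [subLapEig] at hgapi
    set C : Set (Fin d) := {x | G.Reachable i x} with hC
    letI instC : Fintype ↥C := Fintype.ofFinite ↥C
    set B : Matrix ↥C ↥C ℝ :=
      lapM ((adjM fun e => |b e|).submatrix (fun a : ↥C => (a : Fin d))
        (fun a : ↥C => (a : Fin d))) with hB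
    have hBsym : ∀ x y : ↥C, B y x = B x y := by
      intro x y
      exact lapM_symm _ (fun x y => hAsym _ _) x y
    have hBH : B.IsHermitian := by
      ext x y
      simp only [Matrix.conjTranspose_apply, star_trivial]
      exact hBsym x y
    have hone : B *ᵥ (fun _ => (1:ℝ)) = 0 := lapM_mulVec_one _
    have hcard2 : 2 ≤ Fintype.card ↥C := by
      rw [Nat.succ_le_iff, Fintype.one_lt_card_iff]
      obtain ⟨u, hu⟩ := hadj
      refine ⟨⟨i, SimpleGraph.Reachable.refl i⟩, ⟨u, hu.reachable⟩, ?_⟩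
      intro hcontra
      exact (G.ne_of_adj hu) (congrArg Subtype.val hcontra)
    -- restriction of the eigenvector
    have hAzero : ∀ x : ↥C, ∀ y : Fin d, y ∉ C → A (x : Fin d) y = 0 := by
      intro x y hy
      by_contra hne
      exact hy (((x.2 : G.Reachable i x)).trans (hAblock _ _ hne))
    have hrestr : B *ᵥ (fun x : ↥C => w k (x : Fin d)) = lam k • (fun x : ↥C => w k (x : Fin d)) := by
      funext x
      rw [hB, lapM_mulVec]
      have e1 : ∑ y : ↥C, A (x : Fin d) (y : Fin d) = ∑ y, A (x : Fin d) y :=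
        sum_subtype_eq C (fun y => A (x : Fin d) y) (fun y hy => hAzero x y hy)
      have e2 : ∑ y : ↥C, A (x : Fin d) (y : Fin d) * w k (y : Fin d)
          = ∑ y, A (x : Fin d) y * w k y :=
        sum_subtype_eq C (fun y => A (x : Fin d) y * w k y)
          (fun y hy => by
            show A (x : Fin d) y * w k y = 0
            rw [hAzero x y hy, zero_mul])
      simp only [Matrix.submatrix_apply]
      rw [e1, e2]
      have e3 := congrFun (hED.eig k) (x : Fin d)
      rw [lapM_mulVec] at e3
      simpa using e3
    have hiC : i ∈ C := SimpleGraph.Reachable.refl i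
    have hjC : j ∈ C := ⟨p⟩
    exact const_of_small_eig hBH hone hcard2 hb2τ hgapi hrestr hk ⟨i, hiC⟩ ⟨j, hjC⟩
  -- weight facts
  set M := lapCoeff V (fun k => g' (lam k)) with hM
  have hM0 : ∀ e, 0 ≤ M e :=
    fun e => Finset.sum_nonneg fun k _ =>
      mul_nonneg (scad_deriv_nonneg hg (hlamnn k)) (sq_nonneg _)
  have hMS : ∀ e ∈ blockSupp βstar, M e = 0 := by
    intro e he
    refine Finset.sum_eq_zero fun k _ => ?_
    show g' (lam k) * (V e.1.1 k - V e.1.2 k) ^ 2 = 0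
    by_cases hk : lam k < b2 * τ
    · have hz : V e.1.1 k = V e.1.2 k := hconst k hk _ _ he
      rw [hz, sub_self]
      simp
    · rw [hg.deriv_high _ (le_of_not_gt hk), zero_mul]
  have hMc : ∀ e ∉ blockSupp βstar, 2 * |fderiv ℝ ℓ orc (Pi.single e 1)| < M e := by
    intro e he
    set i := e.1.1 with hi
    set j := e.1.2 with hj
    have hnr : ¬ G.Reachable i j := he
    have hij : i ≠ j := ne_of_lt e.2
    set χi : Fin d → ℝ := fun x => if G.Reachable i x then 1 else 0 with hχi
    set χj : Fin d → ℝ := fun x => if G.Reachable j x then 1 else 0 with hχj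
    set y0 : Fin d → ℝ := fun x => (if x = i then 1 else 0) - (if x = j then 1 else 0) with hy0
    have hy0dot : ∀ v : Fin d → ℝ, ∑ x, v x * y0 x = v i - v j := by
      intro v
      simp only [hy0, mul_sub, Finset.sum_sub_distrib, mul_ite, mul_one, mul_zero]
      rw [Finset.sum_ite_eq' Finset.univ i v, Finset.sum_ite_eq' Finset.univ j v]
      simp
    have hLχi : lapM A *ᵥ χi = (0:ℝ) • χi := by
      rw [lapM_mulVec_indicator A (G.Reachable i) (fun x y hxy =>
        ⟨fun hx => hx.trans (hAblock x y hxy), fun hy' => hy'.trans (hAblock x y hxy).symm⟩)]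
      simp
    have hLχj : lapM A *ᵥ χj = (0:ℝ) • χj := by
      rw [lapM_mulVec_indicator A (G.Reachable j) (fun x y hxy =>
        ⟨fun hx => hx.trans (hAblock x y hxy), fun hy' => hy'.trans (hAblock x y hxy).symm⟩)]
      simp
    set ak := fun k => ∑ x, w k x * χi x with hak
    set bk := fun k => ∑ x, w k x * χj x with hbk
    set ck := fun k => ∑ x, w k x * y0 x with hck
    have hckval : ∀ k, ck k = V i k - V j k := fun k => hy0dot (w k)
    have hak0 : ∀ k, lam k ≠ 0 → ak k = 0 := fun k hk => hED.filter hLsym χi 0 hLχi k hk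
    have hbk0 : ∀ k, lam k ≠ 0 → bk k = 0 := fun k hk => hED.filter hLsym χj 0 hLχj k hk
    have hχii : χi i = 1 := by
      show (if G.Reachable i i then (1:ℝ) else 0) = 1
      rw [if_pos (SimpleGraph.Reachable.refl i)]
    have hχij : χi j = 0 := by rw [hχi]; simp [hnr]
    have hχji : χj i = 0 := by
      rw [hχj]
      simp only [ite_eq_right_iff, one_ne_zero]
      intro h; exact absurd h.symm hnr
    have hχjj : χj j = 1 := by
      show (if G.Reachable j j then (1:ℝ) else 0) = 1
      rw [if_pos (SimpleGraph.Reachable.refl j)]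
    have hdisj : ∀ x, χi x * χj x = 0 := by
      intro x
      by_cases hx : G.Reachable i x
      · have : ¬ G.Reachable j x := fun h => hnr (hx.trans h.symm)
        rw [hχj]; simp [this]
      · rw [hχi]; simp [hx]
    have hsum_ac : ∑ k, ak k * ck k = 1 := by
      have h1 := (hED.parseval χi y0).symm
      rw [hy0dot χi, hχii, hχij] at h1
      simpa using h1
    have hsum_bc : ∑ k, bk k * ck k = -1 := by
      have h1 := (hED.parseval χj y0).symm
      rw [hy0dot χj, hχji, hχjj] at h1
      simpa using h1
    have hsum_ab : ∑ k, ak k * bk k = 0 := by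
      have h1 := (hED.parseval χi χj).symm
      rw [Finset.sum_congr rfl (fun x _ => hdisj x)] at h1
      simpa using h1
    set P : ℝ := ∑ x, χi x with hP
    set R : ℝ := ∑ x, χj x with hR
    have hsum_aa : ∑ k, ak k * ak k = P := by
      have h1 := (hED.parseval χi χi).symm
      have h2 : ∀ x, χi x * χi x = χi x := by
        intro x; rw [hχi]; by_cases hx : G.Reachable i x <;> simp [hx]
      rw [Finset.sum_congr rfl (fun x _ => h2 x)] at h1
      exact h1
    have hsum_bb : ∑ k, bk k * bk k = R := by
      have h1 := (hED.parseval χj χj).symm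
      have h2 : ∀ x, χj x * χj x = χj x := by
        intro x; rw [hχj]; by_cases hx : G.Reachable j x <;> simp [hx]
      rw [Finset.sum_congr rfl (fun x _ => h2 x)] at h1
      exact h1
    -- cardinality bounds
    set dm : ℝ := (maxCompCard G : ℝ) with hdm
    have hcomp : ∀ v : Fin d, (∑ x, (if G.Reachable v x then (1:ℝ) else 0))
        = (compCard G v : ℝ) := by
      intro v
      rw [Finset.sum_boole]
      congr 1
      rw [compCard, Nat.card_eq_fintype_card, Fintype.card_subtype]
    have hcomple : ∀ v : Fin d, (compCard G v : ℝ) ≤ dm := by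
      intro v
      rw [hdm]
      exact_mod_cast Finset.le_sup (Finset.mem_univ v)
    have hcomppos : ∀ v : Fin d, (0:ℝ) < (compCard G v : ℝ) := by
      intro v
      have : 0 < compCard G v := by
        rw [compCard]
        exact Nat.card_pos_iff.mpr ⟨⟨⟨v, SimpleGraph.Reachable.refl v⟩⟩, Subtype.finite⟩
      exact_mod_cast this
    have hPval : P = (compCard G i : ℝ) := by rw [hP]; exact hcomp i
    have hRval : R = (compCard G j : ℝ) := by rw [hR]; exact hcomp j
    have hPpos : 0 < P := by rw [hPval]; exact hcomppos i
    have hRpos : 0 < R := by rw [hRval]; exact hcomppos j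
    have hPle : P ≤ dm := by rw [hPval]; exact hcomple i
    have hRle : R ≤ dm := by rw [hRval]; exact hcomple j
    have hdmpos : 0 < dm := lt_of_lt_of_le hPpos hPle
    -- Bessel inequality over the kernel
    set Z : Finset (Fin d) := Finset.univ.filter (fun k => lam k = 0) with hZ
    have hmemZ : ∀ k, k ∉ Z → lam k ≠ 0 := by
      intro k hk
      simpa [hZ] using hk
    have hZac : ∑ k ∈ Z, ak k * ck k = 1 := by
      rw [Finset.sum_subset (Finset.subset_univ Z)
        (fun k _ hk => by rw [hak0 k (hmemZ k hk), zero_mul])]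
      exact hsum_ac
    have hZbc : ∑ k ∈ Z, bk k * ck k = -1 := by
      rw [Finset.sum_subset (Finset.subset_univ Z)
        (fun k _ hk => by rw [hbk0 k (hmemZ k hk), zero_mul])]
      exact hsum_bc
    have hZab : ∑ k ∈ Z, ak k * bk k = 0 := by
      rw [Finset.sum_subset (Finset.subset_univ Z)
        (fun k _ hk => by rw [hak0 k (hmemZ k hk), zero_mul])]
      exact hsum_ab
    have hZaa : ∑ k ∈ Z, ak k * ak k = P := by
      rw [Finset.sum_subset (Finset.subset_univ Z)
        (fun k _ hk => by rw [hak0 k (hmemZ k hk), zero_mul])]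
      exact hsum_aa
    have hZbb : ∑ k ∈ Z, bk k * bk k = R := by
      rw [Finset.sum_subset (Finset.subset_univ Z)
        (fun k _ hk => by rw [hbk0 k (hmemZ k hk), zero_mul])]
      exact hsum_bb
    have hbess := bessel_two Z ak bk ck hPpos hRpos hZaa hZbb hZab hZac hZbc
    rw [one_pow, neg_one_sq] at hbess
    -- lower bound on M e
    have ha0τ : 0 < a0 * τ := mul_pos (lt_of_lt_of_le hg.a1_pos hg.a1_le_a0) hτ
    have hMe1 : M e = ∑ k, g' (lam k) * (ck k)^2 := by
      rw [hM]
      refine Finset.sum_congr rfl fun k _ => ?_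
      show g' (lam k) * (V i k - V j k) ^ 2 = g' (lam k) * (ck k)^2
      rw [hckval k]
    have hstep1 : ∑ k ∈ Z, (a0 * τ) * (ck k * ck k) ≤ ∑ k, g' (lam k) * (ck k)^2 := by
      have h1 : ∑ k ∈ Z, (a0 * τ) * (ck k * ck k) = ∑ k ∈ Z, g' (lam k) * (ck k)^2 := by
        refine Finset.sum_congr rfl fun k hk => ?_
        have hk0 : lam k = 0 := by simpa [hZ] using hk
        rw [hk0, hg.deriv_zero, pow_two]
      rw [h1]
      refine Finset.sum_le_sum_of_subset_of_nonneg (Finset.subset_univ Z) ?_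
      intro k _ _
      exact mul_nonneg (scad_deriv_nonneg hg (hlamnn k)) (sq_nonneg _)
    have hstep2 : (a0 * τ) * (1/P + 1/R) ≤ M e := by
      rw [hMe1]
      calc (a0 * τ) * (1/P + 1/R)
          ≤ (a0 * τ) * (∑ k ∈ Z, ck k * ck k) := by
            apply mul_le_mul_of_nonneg_left _ (le_of_lt ha0τ)
            calc (1:ℝ)/P + 1/R = 1^2/P + 1^2/R := by norm_num
              _ ≤ _ := by
                  have h1 : (1:ℝ)^2/P = 1/P := by norm_num
                  linarith [hbess]
        _ = ∑ k ∈ Z, (a0 * τ) * (ck k * ck k) := by rw [Finset.mul_sum]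
        _ ≤ _ := hstep1
    have hfrac : 2 * (a0 * τ / dm) ≤ (a0 * τ) * (1/P + 1/R) := by
      have h1 : 1/dm ≤ 1/P := one_div_le_one_div_of_le hPpos hPle
      have h2 : 1/dm ≤ 1/R := one_div_le_one_div_of_le hRpos hRle
      have h3 : 2 * (1/dm) ≤ 1/P + 1/R := by linarith
      calc 2 * (a0 * τ / dm) = (a0 * τ) * (2 * (1/dm)) := by ring
        _ ≤ (a0 * τ) * (1/P + 1/R) := mul_le_mul_of_nonneg_left h3 (le_of_lt ha0τ)
    have h4 := hgrad e he
    have h5 : |fderiv ℝ ℓ orc (Pi.single e 1)| < a0 * τ / dm := h4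
    linarith
  exact min_strict ℓ hconv hdiff βstar orc horc_supp horc_min hfoc M hM0 hMS hMc

end KeyLemma


/-- (one LLA step from a point whose blocks refine the target blocks and
whose per-block spectral gaps are large lands exactly on the block oracle; in particular
the block oracle is a fixed point of the LLA algorithm). -/
theorem stmt_2 {d : ℕ} (hd : 2 ≤ d)
    (ℓ : (EdgeIdx d → ℝ) → ℝ) (hconv : ConvexOn ℝ Set.univ ℓ) (hdiff : Differentiable ℝ ℓ)
    (g g' : ℝ → ℝ) (a0 a1 b1 b2 τ : ℝ) (hτ : 0 < τ)
    (hg : SCADLike g g' a0 a1 b1 b2 τ)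
    (βstar orc : EdgeIdx d → ℝ)
    (horc_supp : ∀ e ∉ blockSupp βstar, orc e = 0)
    (horc_min : ∀ β : EdgeIdx d → ℝ, (∀ e ∉ blockSupp βstar, β e = 0) → β ≠ orc →
      ℓ orc < ℓ β)
    (hfoc : ∀ e ∈ blockSupp βstar, fderiv ℝ ℓ orc (Pi.single e 1) = 0)
    (hgrad : ∀ e ∉ blockSupp βstar,
      |fderiv ℝ ℓ orc (Pi.single e 1)| < a0 * τ / (maxCompCard (suppGraph βstar) : ℝ)) :
    (∀ b : EdgeIdx d → ℝ,
      (∀ i j : Fin d, (suppGraph b).Reachable i j → (suppGraph βstar).Reachable i j) →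
      (∀ v : Fin d, (∃ u, (suppGraph βstar).Adj v u) →
        b2 * τ ≤ subLapEig (fun e => |b e|) {j | (suppGraph βstar).Reachable v j} 2) →
      ∀ V lam, IsEigenDecomp (lap fun e => |b e|) V lam →
        ∀ β, β ≠ orc →
          llaObj ℓ (lapCoeff V fun k => g' (lam k)) orc
            < llaObj ℓ (lapCoeff V fun k => g' (lam k)) β) ∧
    ((∀ v : Fin d, (∃ u, (suppGraph βstar).Adj v u) →
        b2 * τ ≤ subLapEig (fun e => |orc e|) {j | (suppGraph βstar).Reachable v j} 2) →
      ∀ V lam, IsEigenDecomp (lap fun e => |orc e|) V lam →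
        ∀ β, β ≠ orc →
          llaObj ℓ (lapCoeff V fun k => g' (lam k)) orc
            < llaObj ℓ (lapCoeff V fun k => g' (lam k)) β) := by
  constructor
  · intro b href hgap V lam hVl β hβ
    exact key_lemma hd ℓ hconv hdiff g g' a0 a1 b1 b2 τ hτ hg βstar orc horc_supp horc_min
      hfoc hgrad b href hgap V lam hVl β hβ
  · intro hgap V lam hVl β hβ
    have href : ∀ i j : Fin d, (suppGraph orc).Reachable i j → (suppGraph βstar).Reachable i j := by
      intro i j hr
      refine reachable_mono ?_ hr
      intro x y hxy
      rw [suppGraph_adj_iff] at hxy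
      rcases lt_trichotomy x y with h | h | h
      · have hne : orc ⟨(x,y),h⟩ ≠ 0 := by
          intro h0
          apply hxy
          show adjM orc x y = 0
          simp [adjM, Matrix.of_apply, dif_pos h, h0]
        have hmem : (⟨(x,y),h⟩ : EdgeIdx d) ∈ blockSupp βstar := by
          by_contra hm
          exact hne (horc_supp _ hm)
        exact hmem
      · exfalso; apply hxy; subst h; simp [adjM]
      · have hne : orc ⟨(y,x),h⟩ ≠ 0 := by
          intro h0
          apply hxy
          show adjM orc x y = 0
          simp [adjM, Matrix.of_apply, dif_neg (asymm h), dif_pos h, h0]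
        have hmem : (⟨(y,x),h⟩ : EdgeIdx d) ∈ blockSupp βstar := by
          by_contra hm
          exact hne (horc_supp _ hm)
        exact (SimpleGraph.Reachable.symm hmem)
    exact key_lemma hd ℓ hconv hdiff g g' a0 a1 b1 b2 τ hτ hg βstar orc horc_supp horc_min
      hfoc hgrad orc href hgap V lam hVl β hβ

end FCLS
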